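/- arXiv:2308.08280 — 2 statements merged into one kernel-verified Lean document; each statement's English description precedes it below -/
import Mathlib

section
/- Damped wave reformulation: Assume n₁ = n₂, A₁,₁ = 0 and A₁,₂ invertible. Let U be a classical solution of the linear partially dissipative system and define W(x,t) := ∫_{−∞}^{x} U₁(y,t) dy. Then for all (x,t): ∂ₓW(x,t) = U₁(x,t), ∂ₜW(x,t) = −A₁,₂ U₂(x,t), and W solves the extended damped wave equation ∂ₜₜW − A₁,₂A₂,₁ ∂ₓₓW + A₁,₂A₂,₂A₁,₂^{−1} ∂ₜ∂ₓW + A₁,₂ D A₁,₂^{−1} ∂ₜW = 0. -/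
open MeasureTheory Matrix Finset

noncomputable section

/-- Index type for the block decomposition `ℝⁿ = ℝ^{n₁} × ℝ^{n₂}`. -/
abbrev Idx (n₁ n₂ : ℕ) := Fin n₁ ⊕ Fin n₂

/-- The partially dissipative matrix `B = [[0,0],[0,D]]`. -/
def Bmat {n₁ n₂ : ℕ} (D : Matrix (Fin n₂) (Fin n₂) ℝ) :
    Matrix (Idx n₁ n₂) (Idx n₁ n₂) ℝ :=
  Matrix.fromBlocks 0 0 0 D

/-- The Kalman rank condition for the pair `(A,B)`: the only `y ∈ ℝⁿ` with
`B A^k y = 0` for all `k = 0,…,n−1` is `y = 0`. -/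
def KalmanCondition {n₁ n₂ : ℕ} (A B : Matrix (Idx n₁ n₂) (Idx n₁ n₂) ℝ) : Prop :=
  ∀ y : Idx n₁ n₂ → ℝ, (∀ k < n₁ + n₂, (B * A ^ k).mulVec y = 0) → y = 0

/-- Spatial derivative `∂ₓU(t,x)` (time is the first argument). -/
def pdx {E : Type*} [NormedAddCommGroup E] [NormedSpace ℝ E]
    (U : ℝ → ℝ → E) (t x : ℝ) : E :=
  deriv (fun y => U t y) x

/-- A classical solution of `∂ₜU + A ∂ₓU = −BU` on `ℝ × [0,∞)`:
a smooth function that is Schwartz in `x`, locally uniformly in `t ≥ 0`,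
and solves the equation for `t ≥ 0`. -/
structure IsClassicalSolution {n₁ n₂ : ℕ} (A : Matrix (Idx n₁ n₂) (Idx n₁ n₂) ℝ)
    (D : Matrix (Fin n₂) (Fin n₂) ℝ) (U : ℝ → ℝ → Idx n₁ n₂ → ℝ) : Prop where
  smooth : ContDiff ℝ (⊤ : ℕ∞) (fun p : ℝ × ℝ => U p.1 p.2)
  decay : ∀ (k m : ℕ) (T : ℝ), ∃ C : ℝ, ∀ t ∈ Set.Icc (0 : ℝ) T, ∀ x : ℝ,
      |x| ^ k * ‖iteratedDeriv m (fun y => U t y) x‖ ≤ C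
  eqn : ∀ (t x : ℝ), 0 ≤ t →
      deriv (fun s => U s x) t + A.mulVec (pdx U t x) + (Bmat D).mulVec (U t x) = 0

/-- Squared `L²` norm of a vector-valued function on `ℝ`. -/
def sqL2 {ι : Type*} [Fintype ι] (f : ℝ → ι → ℝ) : ℝ := ∫ x, ∑ i, (f x i) ^ 2

/-- Squared `H¹` norm. -/
def sqH1 {ι : Type*} [Fintype ι] (f : ℝ → ι → ℝ) : ℝ := sqL2 f + sqL2 (deriv f)

/-- Squared weighted `L²` norm `‖|x|^μ f‖²_{L²}`. -/
def wSqL2 {ι : Type*} [Fintype ι] (μ : ℝ) (f : ℝ → ι → ℝ) : ℝ :=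
  ∫ x, |x| ^ (2 * μ) * ∑ i, (f x i) ^ 2

/-- The dissipated component `U₂(t)`. -/
def U2part {n₁ n₂ : ℕ} (U : ℝ → ℝ → Idx n₁ n₂ → ℝ) (t : ℝ) : ℝ → Fin n₂ → ℝ :=
  fun x j => U t x (Sum.inr j)

/-- The primitive `W(x,t) = ∫_{−∞}^x U₁(y,t) dy` (case `n₁ = n₂ = m`). -/
def Wprim {m : ℕ} (U : ℝ → ℝ → Idx m m → ℝ) (t x : ℝ) : Fin m → ℝ :=
  ∫ y in Set.Iic x, (fun i => U t y (Sum.inl i))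

-- helpers
section Helpers

variable {n : ℕ} {A : Matrix (Idx n n) (Idx n n) ℝ} {D : Matrix (Fin n) (Fin n) ℝ}
  {U : ℝ → ℝ → Idx n n → ℝ}

/-- Restriction CLM. -/
def cL (n : ℕ) (σ : Fin n → Idx n n) : (Idx n n → ℝ) →L[ℝ] (Fin n → ℝ) :=
  (LinearMap.funLeft ℝ ℝ σ).toContinuousLinearMap

@[simp] lemma cL_apply (σ : Fin n → Idx n n) (v : Idx n n → ℝ) (i : Fin n) :
    cL n σ v i = v (σ i) := rfl

lemma norm_cL_le (σ : Fin n → Idx n n) (v : Idx n n → ℝ) : ‖cL n σ v‖ ≤ ‖v‖ := by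
  rw [pi_norm_le_iff_of_nonneg (norm_nonneg v)]
  intro i
  exact norm_le_pi_norm v (σ i)

def Ut (U : ℝ → ℝ → Idx n n → ℝ) (t x : ℝ) : Idx n n → ℝ :=
  fderiv ℝ (fun p : ℝ × ℝ => U p.1 p.2) (t, x) (1, 0)

def Uxd (U : ℝ → ℝ → Idx n n → ℝ) (t x : ℝ) : Idx n n → ℝ :=
  fderiv ℝ (fun p : ℝ × ℝ => U p.1 p.2) (t, x) (0, 1)

lemma hasDerivAt_t (hU : IsClassicalSolution A D U) (t x : ℝ) :
    HasDerivAt (fun s => U s x) (Ut U t x) t := by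
  have hd : HasFDerivAt (fun p : ℝ × ℝ => U p.1 p.2)
      (fderiv ℝ (fun p : ℝ × ℝ => U p.1 p.2) (t, x)) (t, x) :=
    (hU.smooth.differentiable (by simp)).differentiableAt.hasFDerivAt
  have h1 : HasDerivAt (fun s : ℝ => (s, x)) ((1 : ℝ), (0 : ℝ)) t :=
    (hasDerivAt_id t).prodMk (hasDerivAt_const t x)
  exact hd.comp_hasDerivAt t h1

lemma hasDerivAt_x (hU : IsClassicalSolution A D U) (t x : ℝ) :
    HasDerivAt (fun y => U t y) (Uxd U t x) x := by
  have hd : HasFDerivAt (fun p : ℝ × ℝ => U p.1 p.2)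
      (fderiv ℝ (fun p : ℝ × ℝ => U p.1 p.2) (t, x)) (t, x) :=
    (hU.smooth.differentiable (by simp)).differentiableAt.hasFDerivAt
  have h1 : HasDerivAt (fun y : ℝ => (t, y)) ((0 : ℝ), (1 : ℝ)) x :=
    (hasDerivAt_const x t).prodMk (hasDerivAt_id x)
  exact hd.comp_hasDerivAt x h1

lemma eqn' (hU : IsClassicalSolution A D U) (t x : ℝ) (ht : 0 ≤ t) :
    Ut U t x = -(A.mulVec (Uxd U t x)) - (Bmat D).mulVec (U t x) := by
  have h := hU.eqn t x ht
  have h1 : deriv (fun s => U s x) t = Ut U t x := (hasDerivAt_t hU t x).deriv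
  have h2 : pdx U t x = Uxd U t x := (hasDerivAt_x hU t x).deriv
  rw [h1, h2] at h
  rw [add_assoc] at h
  rw [eq_neg_of_add_eq_zero_left h]
  abel

lemma continuous_Ut (hU : IsClassicalSolution A D U) :
    Continuous fun p : ℝ × ℝ => Ut U p.1 p.2 :=
  (ContinuousLinearMap.apply ℝ (Idx n n → ℝ) ((1 : ℝ), (0 : ℝ))).continuous.comp
    (hU.smooth.continuous_fderiv (by simp))

lemma continuous_Uxd (hU : IsClassicalSolution A D U) :
    Continuous fun p : ℝ × ℝ => Uxd U p.1 p.2 :=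
  (ContinuousLinearMap.apply ℝ (Idx n n → ℝ) ((0 : ℝ), (1 : ℝ))).continuous.comp
    (hU.smooth.continuous_fderiv (by simp))

lemma continuous_U (hU : IsClassicalSolution A D U) :
    Continuous fun p : ℝ × ℝ => U p.1 p.2 := hU.smooth.continuous

end Helpers

section Helpers2

variable {n : ℕ} {A : Matrix (Idx n n) (Idx n n) ℝ} {D : Matrix (Fin n) (Fin n) ℝ}
  {U : ℝ → ℝ → Idx n n → ℝ}

lemma decay_bound (hU : IsClassicalSolution A D U) (T : ℝ) :
    ∃ C : ℝ, 0 ≤ C ∧ ∀ t ∈ Set.Icc (0 : ℝ) T, ∀ x : ℝ,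
      ‖U t x‖ ≤ C / (1 + x ^ 2) ∧ ‖Uxd U t x‖ ≤ C / (1 + x ^ 2) := by
  obtain ⟨C0, h0⟩ := hU.decay 0 0 T
  obtain ⟨C2, h2⟩ := hU.decay 2 0 T
  obtain ⟨C0', h0'⟩ := hU.decay 0 1 T
  obtain ⟨C2', h2'⟩ := hU.decay 2 1 T
  refine ⟨|C0| + |C2| + |C0'| + |C2'|, by positivity, ?_⟩
  intro t ht x
  have hpos : (0 : ℝ) < 1 + x ^ 2 := by positivity
  have e0 : iteratedDeriv 0 (fun y => U t y) x = U t x := by simp [iteratedDeriv_zero]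
  have e1 : iteratedDeriv 1 (fun y => U t y) x = Uxd U t x := by
    rw [iteratedDeriv_one]; exact (hasDerivAt_x hU t x).deriv
  have a0 := h0 t ht x; rw [e0, pow_zero, one_mul] at a0
  have a2 := h2 t ht x; rw [e0, sq_abs] at a2
  have a0' := h0' t ht x; rw [e1, pow_zero, one_mul] at a0'
  have a2' := h2' t ht x; rw [e1, sq_abs] at a2'
  constructor
  · rw [le_div_iff₀ hpos]
    nlinarith [norm_nonneg (U t x), le_abs_self C0, le_abs_self C2, abs_nonneg C0', abs_nonneg C2']
  · rw [le_div_iff₀ hpos]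
    nlinarith [norm_nonneg (Uxd U t x), le_abs_self C0', le_abs_self C2', abs_nonneg C0, abs_nonneg C2]

lemma decay_bound_Ut (hU : IsClassicalSolution A D U) (T : ℝ) :
    ∃ C : ℝ, 0 ≤ C ∧ ∀ t ∈ Set.Icc (0 : ℝ) T, ∀ x : ℝ,
      ‖Ut U t x‖ ≤ C / (1 + x ^ 2) := by
  obtain ⟨C, hC0, hC⟩ := decay_bound hU T
  set LA : (Idx n n → ℝ) →L[ℝ] (Idx n n → ℝ) := (Matrix.mulVecLin A).toContinuousLinearMap with hLA
  set LB : (Idx n n → ℝ) →L[ℝ] (Idx n n → ℝ) := (Matrix.mulVecLin (Bmat D)).toContinuousLinearMap with hLB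
  refine ⟨(‖LA‖ + ‖LB‖) * C, by positivity, ?_⟩
  intro t ht x
  have hpos : (0 : ℝ) < 1 + x ^ 2 := by positivity
  obtain ⟨b1, b2⟩ := hC t ht x
  rw [eqn' hU t x ht.1]
  have h1 : ‖A.mulVec (Uxd U t x)‖ ≤ ‖LA‖ * (C / (1 + x ^ 2)) := by
    calc ‖A.mulVec (Uxd U t x)‖ = ‖LA (Uxd U t x)‖ := rfl
      _ ≤ ‖LA‖ * ‖Uxd U t x‖ := LA.le_opNorm _
      _ ≤ ‖LA‖ * (C / (1 + x ^ 2)) := by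
          exact mul_le_mul_of_nonneg_left b2 (norm_nonneg _)
  have h2 : ‖(Bmat D).mulVec (U t x)‖ ≤ ‖LB‖ * (C / (1 + x ^ 2)) := by
    calc ‖(Bmat D).mulVec (U t x)‖ = ‖LB (U t x)‖ := rfl
      _ ≤ ‖LB‖ * ‖U t x‖ := LB.le_opNorm _
      _ ≤ ‖LB‖ * (C / (1 + x ^ 2)) := mul_le_mul_of_nonneg_left b1 (norm_nonneg _)
  calc ‖-(A.mulVec (Uxd U t x)) - (Bmat D).mulVec (U t x)‖
      ≤ ‖A.mulVec (Uxd U t x)‖ + ‖(Bmat D).mulVec (U t x)‖ := by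
        rw [sub_eq_add_neg, ← neg_add, norm_neg]; exact norm_add_le _ _
    _ ≤ ‖LA‖ * (C / (1 + x ^ 2)) + ‖LB‖ * (C / (1 + x ^ 2)) := add_le_add h1 h2
    _ = (‖LA‖ + ‖LB‖) * C / (1 + x ^ 2) := by ring

lemma integrable_decay {F : Type*} [NormedAddCommGroup F] {g : ℝ → F} (hg : Continuous g)
    {C : ℝ} (hC : ∀ x, ‖g x‖ ≤ C / (1 + x ^ 2)) : Integrable g := by
  refine (integrable_inv_one_add_sq.const_mul C).mono' hg.aestronglyMeasurable ?_
  filter_upwards with x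
  simpa [div_eq_mul_inv] using hC x

lemma tendsto_decay_zero {F : Type*} [NormedAddCommGroup F] {g : ℝ → F}
    {C : ℝ} (hC : ∀ x, ‖g x‖ ≤ C / (1 + x ^ 2)) :
    Filter.Tendsto g Filter.atBot (nhds 0) := by
  apply squeeze_zero_norm hC
  apply Filter.Tendsto.div_atTop tendsto_const_nhds
  have h1 : Filter.Tendsto (fun y : ℝ => (-y) ^ 2) Filter.atBot Filter.atTop :=
    (Filter.tendsto_pow_atTop two_ne_zero).comp Filter.tendsto_neg_atBot_atTop
  simp only [neg_sq] at h1
  exact Filter.tendsto_atTop_add_const_left _ 1 h1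

-- block computations
lemma cL_inl_mulVec (A : Matrix (Idx n n) (Idx n n) ℝ) (v : Idx n n → ℝ) :
    cL n Sum.inl (A.mulVec v) =
      A.toBlocks₁₁.mulVec (cL n Sum.inl v) + A.toBlocks₁₂.mulVec (cL n Sum.inr v) := by
  funext i
  simp [Matrix.mulVec, dotProduct, Fintype.sum_sum_type, Matrix.toBlocks₁₁, Matrix.toBlocks₁₂]

lemma cL_inr_mulVec (A : Matrix (Idx n n) (Idx n n) ℝ) (v : Idx n n → ℝ) :
    cL n Sum.inr (A.mulVec v) =
      A.toBlocks₂₁.mulVec (cL n Sum.inl v) + A.toBlocks₂₂.mulVec (cL n Sum.inr v) := by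
  funext i
  simp [Matrix.mulVec, dotProduct, Fintype.sum_sum_type, Matrix.toBlocks₂₁, Matrix.toBlocks₂₂]

lemma cL_inl_B (D : Matrix (Fin n) (Fin n) ℝ) (v : Idx n n → ℝ) :
    cL n Sum.inl ((Bmat D).mulVec v) = 0 := by
  funext i
  simp [Bmat, Matrix.mulVec, dotProduct, Fintype.sum_sum_type]

lemma cL_inr_B (D : Matrix (Fin n) (Fin n) ℝ) (v : Idx n n → ℝ) :
    cL n Sum.inr ((Bmat D).mulVec v) = D.mulVec (cL n Sum.inr v) := by
  funext i
  simp [Bmat, Matrix.mulVec, dotProduct, Fintype.sum_sum_type]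

end Helpers2

section Helpers3

variable {n : ℕ} {A : Matrix (Idx n n) (Idx n n) ℝ} {D : Matrix (Fin n) (Fin n) ℝ}
  {U : ℝ → ℝ → Idx n n → ℝ}

lemma continuous_U_t (hU : IsClassicalSolution A D U) (t : ℝ) :
    Continuous fun y => U t y :=
  hU.smooth.continuous.comp (continuous_const.prodMk continuous_id)

lemma continuous_Ut_t (hU : IsClassicalSolution A D U) (t : ℝ) :
    Continuous fun y => Ut U t y :=
  (continuous_Ut hU).comp (continuous_const.prodMk continuous_id)

lemma integrable_U_t (hU : IsClassicalSolution A D U) {t : ℝ} (ht : 0 ≤ t) :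
    Integrable fun y => U t y := by
  obtain ⟨C, hC0, hC⟩ := decay_bound hU t
  exact integrable_decay (continuous_U_t hU t) (fun x => (hC t ⟨ht, le_rfl⟩ x).1)

lemma integrable_Uxd (hU : IsClassicalSolution A D U) {t : ℝ} (ht : 0 ≤ t) :
    Integrable fun y => Uxd U t y := by
  obtain ⟨C, hC0, hC⟩ := decay_bound hU t
  refine integrable_decay ?_ (fun x => (hC t ⟨ht, le_rfl⟩ x).2)
  exact (continuous_Uxd hU).comp (continuous_const.prodMk continuous_id)

lemma part1 (hU : IsClassicalSolution A D U) (t x : ℝ) (ht : 0 ≤ t) :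
    HasDerivAt (fun z => Wprim U t z) (cL n Sum.inl (U t x)) x := by
  set g : ℝ → Fin n → ℝ := fun y => cL n Sum.inl (U t y) with hg
  have hgc : Continuous g := (cL n Sum.inl).continuous.comp (continuous_U_t hU t)
  have hint : Integrable g := (cL n Sum.inl).integrable_comp (integrable_U_t hU ht)
  have key : ∀ z, Wprim U t z = (∫ y in Set.Iic x, g y) + ∫ y in x..z, g y := by
    intro z
    have h := intervalIntegral.integral_Iic_sub_Iic (hint.integrableOn (s := Set.Iic x))
      (hint.integrableOn (s := Set.Iic z))
    have h2 : Wprim U t z = ∫ y in Set.Iic z, g y := rfl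
    rw [h2, ← h]; abel
  have hD : HasDerivAt (fun z => ∫ y in x..z, g y) (g x) x :=
    intervalIntegral.integral_hasDerivAt_right hint.intervalIntegrable
      (hgc.stronglyMeasurable.stronglyMeasurableAtFilter) hgc.continuousAt
  have hmain := hD.const_add (∫ y in Set.Iic x, g y)
  have heq : (fun z => Wprim U t z) =
      fun z => (∫ y in Set.Iic x, g y) + ∫ y in x..z, g y := funext key
  rw [heq]
  exact hmain

lemma ftc2 (hU : IsClassicalSolution A D U) {t : ℝ} (ht : 0 ≤ t) (x : ℝ) :
    ∫ y in Set.Iic x, cL n Sum.inr (Uxd U t y) = cL n Sum.inr (U t x) := by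
  obtain ⟨C, hC0, hC⟩ := decay_bound hU t
  have hb : ∀ y : ℝ, ‖cL n Sum.inr (U t y)‖ ≤ C / (1 + y ^ 2) :=
    fun y => le_trans (norm_cL_le _ _) (hC t ⟨ht, le_rfl⟩ y).1
  have h := integral_Iic_of_hasDerivAt_of_tendsto' (a := x) (m := 0)
    (f := fun y => cL n Sum.inr (U t y)) (f' := fun y => cL n Sum.inr (Uxd U t y))
    (fun y _ => ((cL n Sum.inr).hasFDerivAt).comp_hasDerivAt y (hasDerivAt_x hU t y))
    (((cL n Sum.inr).integrable_comp (integrable_Uxd hU ht)).integrableOn)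
    (tendsto_decay_zero hb)
  rw [h, sub_zero]

lemma part2 (hU : IsClassicalSolution A D U) (hA11 : A.toBlocks₁₁ = 0)
    (t x : ℝ) (ht : 0 < t) :
    HasDerivAt (fun s => Wprim U s x)
      (-(A.toBlocks₁₂.mulVec (cL n Sum.inr (U t x)))) t := by
  obtain ⟨C, hC0, hC⟩ := decay_bound_Ut hU (2 * t)
  have hball : ∀ s ∈ Metric.ball t (t / 2), s ∈ Set.Icc (0 : ℝ) (2 * t) := by
    intro s hs
    rw [Metric.mem_ball, Real.dist_eq, abs_sub_lt_iff] at hs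
    constructor <;> linarith [hs.1, hs.2]
  have hbijint : Integrable (fun y : ℝ => C / (1 + y ^ 2)) := by
    simpa [div_eq_mul_inv] using integrable_inv_one_add_sq.const_mul C
  have hder := hasDerivAt_integral_of_dominated_loc_of_deriv_le
    (μ := volume.restrict (Set.Iic x))
    (F := fun s y => cL n Sum.inl (U s y)) (F' := fun s y => cL n Sum.inl (Ut U s y))
    (bound := fun y => C / (1 + y ^ 2)) (Metric.ball_mem_nhds t (half_pos ht))
    (Filter.Eventually.of_forall fun s =>
      (((cL n Sum.inl).continuous.comp (continuous_U_t hU s)).aestronglyMeasurable))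
    (((cL n Sum.inl).integrable_comp (integrable_U_t hU ht.le)).restrict)
    (((cL n Sum.inl).continuous.comp (continuous_Ut_t hU t)).aestronglyMeasurable)
    (Filter.Eventually.of_forall fun y s hs =>
      (norm_cL_le _ _).trans (hC s (hball s hs) y))
    hbijint.restrict
    (Filter.Eventually.of_forall fun y s _ =>
      ((cL n Sum.inl).hasFDerivAt).comp_hasDerivAt s (hasDerivAt_t hU s y))
  obtain ⟨-, hder⟩ := hder
  have hval : (∫ y in Set.Iic x, cL n Sum.inl (Ut U t y)) =
      -(A.toBlocks₁₂.mulVec (cL n Sum.inr (U t x))) := by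
    have e : ∀ y : ℝ, cL n Sum.inl (Ut U t y) =
        -((Matrix.mulVecLin A.toBlocks₁₂).toContinuousLinearMap
            (cL n Sum.inr (Uxd U t y))) := by
      intro y
      rw [eqn' hU t y ht.le, map_sub, map_neg, cL_inl_mulVec, cL_inl_B, hA11]
      simp
    simp_rw [e]
    rw [integral_neg]
    rw [ContinuousLinearMap.integral_comp_comm _
      (((cL n Sum.inr).integrable_comp (integrable_Uxd hU ht.le)).restrict)]
    rw [ftc2 hU ht.le x]
    rfl
  rw [← hval]
  exact hder

end Helpers3

/-- Damped wave reformulation: if `n₁ = n₂ = m`, `A₁,₁ = 0` and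
`A₁,₂` is invertible, then `W(x,t) = ∫_{−∞}^x U₁(y,t) dy` satisfies `∂ₓW = U₁`,
`∂ₜW = −A₁,₂U₂`, and the extended damped wave equation
`∂ₜₜW − A₁,₂A₂,₁∂ₓₓW + A₁,₂A₂,₂A₁,₂⁻¹ ∂ₜ∂ₓW + A₁,₂DA₁,₂⁻¹ ∂ₜW = 0`. -/
theorem damped_wave_reformulation
    {m : ℕ} (hm : 1 ≤ m)
    (A : Matrix (Idx m m) (Idx m m) ℝ) (hA : A.IsSymm)
    (hA11 : A.toBlocks₁₁ = 0) (hA12 : IsUnit A.toBlocks₁₂)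
    (D : Matrix (Fin m) (Fin m) ℝ) (hD : D.IsSymm) (hDpos : D.PosDef)
    (κ : ℝ) (hκ : 0 < κ)
    (hdiss : ∀ X : Fin m → ℝ, κ * ∑ j, (X j) ^ 2 ≤ ∑ j, D.mulVec X j * X j)
    (U : ℝ → ℝ → Idx m m → ℝ) (hU : IsClassicalSolution A D U) :
    (∀ (t x : ℝ), 0 ≤ t →
        HasDerivAt (fun z => Wprim U t z) (fun i => U t x (Sum.inl i)) x) ∧
    (∀ (t x : ℝ), 0 < t →
        HasDerivAt (fun s => Wprim U s x)
          (-(A.toBlocks₁₂.mulVec (fun j => U t x (Sum.inr j)))) t) ∧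
    (∀ (t x : ℝ), 0 < t →
        deriv (fun s => deriv (fun s' => Wprim U s' x) s) t
          - (A.toBlocks₁₂ * A.toBlocks₂₁).mulVec
              (deriv (fun y => deriv (fun y' => Wprim U t y') y) x)
          + (A.toBlocks₁₂ * A.toBlocks₂₂ * (A.toBlocks₁₂)⁻¹).mulVec
              (deriv (fun s => deriv (fun y => Wprim U s y) x) t)
          + (A.toBlocks₁₂ * D * (A.toBlocks₁₂)⁻¹).mulVec
              (deriv (fun s => Wprim U s x) t)
          = 0) := by
  have hA12det : IsUnit A.toBlocks₁₂.det := (Matrix.isUnit_iff_isUnit_det _).mp hA12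
  have hinv : A.toBlocks₁₂⁻¹ * A.toBlocks₁₂ = 1 := Matrix.nonsing_inv_mul _ hA12det
  refine ⟨fun t x ht => part1 hU t x ht, fun t x ht => part2 hU hA11 t x ht, ?_⟩
  intro t x ht
  have hmem : Set.Ioi (0 : ℝ) ∈ nhds t := isOpen_Ioi.mem_nhds ht
  have e1 : (fun s => deriv (fun s' => Wprim U s' x) s) =ᶠ[nhds t]
      (fun s => -(A.toBlocks₁₂.mulVec (cL m Sum.inr (U s x)))) := by
    filter_upwards [hmem] with s hs
    exact (part2 hU hA11 s x hs).deriv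
  have hN : HasDerivAt (fun s => -(A.toBlocks₁₂.mulVec (cL m Sum.inr (U s x))))
      (-(A.toBlocks₁₂.mulVec (cL m Sum.inr (Ut U t x)))) t := by
    have h0 := (((Matrix.mulVecLin A.toBlocks₁₂).toContinuousLinearMap.comp
      (cL m Sum.inr)).hasFDerivAt).comp_hasDerivAt t (hasDerivAt_t hU t x)
    exact h0.neg
  have T1 : deriv (fun s => deriv (fun s' => Wprim U s' x) s) t
      = -(A.toBlocks₁₂.mulVec (cL m Sum.inr (Ut U t x))) := by
    rw [e1.deriv_eq]; exact hN.deriv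
  have hx1 : (fun y => deriv (fun y' => Wprim U t y') y) =
      fun y => cL m Sum.inl (U t y) :=
    funext fun y => (part1 hU t y ht.le).deriv
  have T2 : deriv (fun y => deriv (fun y' => Wprim U t y') y) x
      = cL m Sum.inl (Uxd U t x) := by
    rw [hx1]
    exact (((cL m Sum.inl).hasFDerivAt).comp_hasDerivAt x (hasDerivAt_x hU t x)).deriv
  have e3 : (fun s => deriv (fun y => Wprim U s y) x) =ᶠ[nhds t]
      (fun s => cL m Sum.inl (U s x)) := by
    filter_upwards [hmem] with s hs
    exact (part1 hU s x hs.le).deriv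
  have T3 : deriv (fun s => deriv (fun y => Wprim U s y) x) t
      = cL m Sum.inl (Ut U t x) := by
    rw [e3.deriv_eq]
    exact (((cL m Sum.inl).hasFDerivAt).comp_hasDerivAt t (hasDerivAt_t hU t x)).deriv
  have T4 : deriv (fun s => Wprim U s x) t
      = -(A.toBlocks₁₂.mulVec (cL m Sum.inr (U t x))) :=
    (part2 hU hA11 t x ht).deriv
  rw [T1, T2, T3, T4]
  have heinl : cL m Sum.inl (Ut U t x) =
      -(A.toBlocks₁₂.mulVec (cL m Sum.inr (Uxd U t x))) := by
    rw [eqn' hU t x ht.le, map_sub, map_neg, cL_inl_mulVec, cL_inl_B, hA11]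
    simp
  have heinr : cL m Sum.inr (Ut U t x) =
      -(A.toBlocks₂₁.mulVec (cL m Sum.inl (Uxd U t x))
        + A.toBlocks₂₂.mulVec (cL m Sum.inr (Uxd U t x))
        + D.mulVec (cL m Sum.inr (U t x))) := by
    rw [eqn' hU t x ht.le, map_sub, map_neg, cL_inr_mulVec, cL_inr_B]
    abel
  rw [heinl, heinr]
  have h1 : A.toBlocks₁₂ * A.toBlocks₂₂ * A.toBlocks₁₂⁻¹ * A.toBlocks₁₂
      = A.toBlocks₁₂ * A.toBlocks₂₂ := by
    rw [mul_assoc (A.toBlocks₁₂ * A.toBlocks₂₂), hinv, mul_one]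
  have h2 : A.toBlocks₁₂ * D * A.toBlocks₁₂⁻¹ * A.toBlocks₁₂
      = A.toBlocks₁₂ * D := by
    rw [mul_assoc (A.toBlocks₁₂ * D), hinv, mul_one]
  simp only [Matrix.mulVec_neg, Matrix.mulVec_mulVec, Matrix.mulVec_add, h1, h2, neg_neg]
  abel
end
end

section
/- Polynomial decay from a weighted differential inequality (Lemma B.2): Let T > 0 and let E₁, E₂ : [0,T) → ℝ be nonnegative continuous functions, differentiable on (0,T), such that for all t ∈ (0,T): (d/dt)(E₁(t) + η₀ t E₂(t)) + a₁ E₁(t)^{1+1/μ} + a₂ E₂(t) ≤ 0, where a₁, a₂, μ > 0 and 0 < η₀ < min{a₂/μ, a₂}. Then there exists a constant C > 0, depending only on μ, η₀ and a₂ (in particular independent of T and a₁), such that E₁(t) + η₀ t E₂(t) ≤ C a₁^{−μ} t^{−μ} for all t ∈ (0,T). -/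
noncomputable section

open Set Filter Real Topology

/-- **Lemma B.2.** Polynomial decay from a weighted differential
inequality: if nonnegative continuous `E₁, E₂` on `[0,T)`, differentiable on `(0,T)`,
satisfy `(d/dt)(E₁ + η₀ t E₂) + a₁E₁^{1+1/μ} + a₂E₂ ≤ 0` with `a₁, a₂, μ > 0` and
`0 < η₀ < min{a₂/μ, a₂}`, then `E₁(t) + η₀ t E₂(t) ≤ C a₁^{−μ} t^{−μ}` on `(0,T)`,
with `C` depending only on `μ, η₀, a₂`. -/
theorem polynomial_decay_from_differential_inequality
    (μ η₀ a₂ : ℝ) (hμ : 0 < μ) (ha₂ : 0 < a₂)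
    (hη₀ : 0 < η₀) (hη₀' : η₀ < min (a₂ / μ) a₂) :
    ∃ C : ℝ, 0 < C ∧
      ∀ (T a₁ : ℝ), 0 < T → 0 < a₁ →
      ∀ E₁ E₂ : ℝ → ℝ,
        ContinuousOn E₁ (Set.Ico 0 T) → ContinuousOn E₂ (Set.Ico 0 T) →
        (∀ t ∈ Set.Ico (0 : ℝ) T, 0 ≤ E₁ t) →
        (∀ t ∈ Set.Ico (0 : ℝ) T, 0 ≤ E₂ t) →
        (∀ t ∈ Set.Ioo (0 : ℝ) T, DifferentiableAt ℝ E₁ t) →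
        (∀ t ∈ Set.Ioo (0 : ℝ) T, DifferentiableAt ℝ E₂ t) →
        (∀ t ∈ Set.Ioo (0 : ℝ) T,
          deriv (fun s => E₁ s + η₀ * s * E₂ s) t +
              a₁ * E₁ t ^ (1 + 1 / μ) + a₂ * E₂ t ≤ 0) →
        ∀ t ∈ Set.Ioo (0 : ℝ) T,
          E₁ t + η₀ * t * E₂ t ≤ C * a₁ ^ (-μ) * t ^ (-μ) := by
  have hμne : μ ≠ 0 := hμ.ne'
  have hμη : μ * η₀ < a₂ := by
    have h : η₀ < a₂ / μ := lt_of_lt_of_le hη₀' (min_le_left _ _)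
    rw [lt_div_iff₀ hμ] at h; linarith
  set θ : ℝ := (1 - μ * η₀ / a₂) / 2 with hθdef
  have hfrac : μ * η₀ / a₂ < 1 := by rw [div_lt_one ha₂]; exact hμη
  have hfracpos : 0 < μ * η₀ / a₂ := by positivity
  have hθpos : 0 < θ := by rw [hθdef]; linarith
  have h2μ : (0:ℝ) < 2 * μ := by linarith
  set K : ℝ := (2 * μ) ^ (μ : ℝ) * θ ^ (-(μ + 1)) with hKdef
  have hKpos : 0 < K := by
    rw [hKdef]
    exact mul_pos (Real.rpow_pos_of_pos h2μ μ) (Real.rpow_pos_of_pos hθpos _)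
  have hkey : (θ * K) ^ (1 + 1 / μ) = 2 * μ * K := by
    have h1 : θ * K = (2 * μ) ^ (μ : ℝ) * θ ^ (-μ : ℝ) := by
      rw [hKdef, show (-(μ + 1)) = (-μ : ℝ) + (-1 : ℝ) by ring, Real.rpow_add hθpos,
        Real.rpow_neg_one]
      field_simp
    rw [h1, Real.mul_rpow (Real.rpow_pos_of_pos h2μ _).le (Real.rpow_pos_of_pos hθpos _).le,
      ← Real.rpow_mul h2μ.le, ← Real.rpow_mul hθpos.le,
      show μ * (1 + 1 / μ) = μ + 1 by field_simp,
      show (-μ : ℝ) * (1 + 1 / μ) = -(μ + 1) by field_simp,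
      show (μ + 1 : ℝ) = 1 + μ by ring, Real.rpow_add h2μ, Real.rpow_one, hKdef]
    ring
  have hθeq : (1 - θ) * a₂ = (a₂ + μ * η₀) / 2 := by rw [hθdef]; field_simp; ring
  have hBnum : μ * η₀ < (1 - θ) * a₂ := by rw [hθeq]; linarith
  refine ⟨K, hKpos, ?_⟩
  intro T a₁ hT ha₁ E₁ E₂ hc₁ hc₂ hne₁ hne₂ hd₁ hd₂ hineq t ht
  obtain ⟨ht0, htT⟩ := ht
  have ha₁p : 0 < a₁ ^ (-μ : ℝ) := Real.rpow_pos_of_pos ha₁ _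
  set F : ℝ → ℝ := fun u => E₁ u + η₀ * u * E₂ u with hFdef
  have hFc : ContinuousOn F (Ico 0 T) :=
    hc₁.add ((continuousOn_const.mul continuousOn_id).mul hc₂)
  have hF0 : ∀ u ∈ Ico (0:ℝ) T, 0 ≤ F u := fun u hu =>
    add_nonneg (hne₁ u hu) (mul_nonneg (mul_nonneg hη₀.le hu.1) (hne₂ u hu))
  have hFd : ∀ u ∈ Ioo (0:ℝ) T, DifferentiableAt ℝ F u := fun u hu =>
    (hd₁ u hu).add ((differentiableAt_fun_id.const_mul η₀).mul (hd₂ u hu))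
  have hφd : ∀ u : ℝ, 0 < u →
      HasDerivAt (fun x : ℝ => K * a₁ ^ (-μ) * x ^ (-μ))
        (K * a₁ ^ (-μ) * (-μ * u ^ (-μ - 1))) u := by
    intro u hu
    exact (Real.hasDerivAt_rpow_const (p := -μ) (Or.inl hu.ne')).const_mul (K * a₁ ^ (-μ))
  -- a bound for F on [0, t]
  have hIcc : Icc (0:ℝ) t ⊆ Ico 0 T := fun u hu => ⟨hu.1, lt_of_le_of_lt hu.2 htT⟩
  obtain ⟨M, hM⟩ : BddAbove (F '' Icc 0 t) :=
    (isCompact_Icc.image_of_continuousOn (hFc.mono hIcc)).bddAbove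
  have hM' : ∀ u ∈ Icc (0:ℝ) t, F u ≤ M := fun u hu => hM ⟨u, hu, rfl⟩
  have hM0 : 0 ≤ M := le_trans (hF0 t ⟨ht0.le, htT⟩) (hM' t ⟨ht0.le, le_refl t⟩)
  have hM1 : (0:ℝ) < M + 1 := by linarith
  -- a starting point s with F s < φ s
  have hbpos : 0 < K * a₁ ^ (-μ) / (M + 1) := div_pos (mul_pos hKpos ha₁p) hM1
  set s₀ : ℝ := (K * a₁ ^ (-μ) / (M + 1)) ^ (1 / μ : ℝ) with hs₀def
  have hs₀pos : 0 < s₀ := Real.rpow_pos_of_pos hbpos _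
  have hφs₀ : K * a₁ ^ (-μ) * s₀ ^ (-μ) = M + 1 := by
    rw [hs₀def, ← Real.rpow_mul hbpos.le, show (1 / μ) * (-μ) = (-1 : ℝ) by field_simp,
      Real.rpow_neg_one]
    field_simp
  set s : ℝ := min (t / 2) s₀ with hsdef
  have hs_pos : 0 < s := lt_min (by linarith) hs₀pos
  have hs_lt_t : s < t := lt_of_le_of_lt (min_le_left _ _) (by linarith)
  have hφs : M + 1 ≤ K * a₁ ^ (-μ) * s ^ (-μ) := by
    rw [← hφs₀]
    have h := Real.rpow_le_rpow_of_nonpos hs_pos (min_le_right (t / 2) s₀)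
      (neg_nonpos.2 hμ.le)
    exact mul_le_mul_of_nonneg_left h (mul_pos hKpos ha₁p).le
  have hgs : F s < K * a₁ ^ (-μ) * s ^ (-μ) :=
    lt_of_le_of_lt (hM' s ⟨hs_pos.le, hs_lt_t.le⟩) (lt_of_lt_of_le (by linarith) hφs)
  -- main claim by contradiction
  show F t ≤ K * a₁ ^ (-μ) * t ^ (-μ)
  by_contra hcon
  push_neg at hcon
  set g : ℝ → ℝ := fun u => F u - K * a₁ ^ (-μ) * u ^ (-μ) with hgdef
  have hIccst : Icc s t ⊆ Ico 0 T := fun u hu =>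
    ⟨le_trans hs_pos.le hu.1, lt_of_le_of_lt hu.2 htT⟩
  have hgc : ContinuousOn g (Icc s t) := by
    rw [hgdef]
    refine (hFc.mono hIccst).sub ?_
    intro u hu
    exact (continuousAt_const.mul
      (Real.continuousAt_rpow_const u (-μ)
        (Or.inl (ne_of_gt (lt_of_lt_of_le hs_pos hu.1))))).continuousWithinAt
  set S : Set ℝ := Icc s t ∩ g ⁻¹' (Ici 0) with hSdef
  have hScl : IsClosed S := hgc.preimage_isClosed_of_isClosed isClosed_Icc isClosed_Ici
  have hSne : S.Nonempty := by
    refine ⟨t, ⟨hs_lt_t.le, le_refl t⟩, ?_⟩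
    simp only [mem_preimage, mem_Ici, hgdef]
    linarith
  have hSbdd : BddBelow S := ⟨s, fun u hu => hu.1.1⟩
  set t₀ : ℝ := sInf S with ht₀def
  have ht₀S : t₀ ∈ S := hScl.csInf_mem hSne hSbdd
  have ht₀Icc : t₀ ∈ Icc s t := ht₀S.1
  have hg₀ : 0 ≤ g t₀ := ht₀S.2
  have hgsneg : g s < 0 := by simp only [hgdef]; linarith
  have hst₀ : s < t₀ := by
    rcases lt_or_eq_of_le ht₀Icc.1 with h | h
    · exact h
    · exfalso; rw [← h] at hg₀; linarith
  have ht₀pos : 0 < t₀ := lt_trans hs_pos hst₀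
  have ht₀Ioo : t₀ ∈ Ioo (0:ℝ) T := ⟨ht₀pos, lt_of_le_of_lt ht₀Icc.2 htT⟩
  have hneg : ∀ u, s ≤ u → u < t₀ → g u < 0 := by
    intro u h1 h2
    by_contra h
    push_neg at h
    exact absurd (csInf_le hSbdd ⟨⟨h1, le_trans h2.le ht₀Icc.2⟩, h⟩) (not_le.2 h2)
  -- derivative of g at t₀
  have hF' : HasDerivAt F (deriv F t₀) t₀ := (hFd t₀ ht₀Ioo).hasDerivAt
  have hg' : HasDerivAt g (deriv F t₀ - K * a₁ ^ (-μ) * (-μ * t₀ ^ (-μ - 1))) t₀ := by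
    rw [hgdef]
    exact hF'.sub (hφd t₀ ht₀pos)
  -- the derivative is nonnegative (first crossing from below)
  have h0le : 0 ≤ deriv F t₀ - K * a₁ ^ (-μ) * (-μ * t₀ ^ (-μ - 1)) := by
    have hslope := hasDerivAt_iff_tendsto_slope.mp hg'
    have hmono : 𝓝[<] t₀ ≤ 𝓝[≠] t₀ :=
      nhdsWithin_mono _ fun u hu => ne_of_lt hu
    refine ge_of_tendsto (hslope.mono_left hmono) ?_
    filter_upwards [Ioo_mem_nhdsLT hst₀] with u hu
    rw [slope_def_field]
    have h1 : g u < 0 := hneg u hu.1.le hu.2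
    refine div_nonneg_iff.mpr (Or.inr ⟨by linarith, by linarith [hu.2]⟩)
  -- positivity facts
  have htp : 0 < t₀ ^ (-μ : ℝ) := Real.rpow_pos_of_pos ht₀pos _
  have hBt' : 0 < t₀ ^ (-μ - 1 : ℝ) := Real.rpow_pos_of_pos ht₀pos _
  have hXpos : 0 < K * a₁ ^ (-μ) * t₀ ^ (-μ) := mul_pos (mul_pos hKpos ha₁p) htp
  have hsplit : K * a₁ ^ (-μ) * t₀ ^ (-μ) ≤ E₁ t₀ + η₀ * t₀ * E₂ t₀ := by
    have h := hg₀
    simp only [hgdef, hFdef] at h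
    linarith
  have hE₂0 : 0 ≤ E₂ t₀ := hne₂ t₀ ⟨ht₀pos.le, ht₀Ioo.2⟩
  have hE₁0 : 0 ≤ E₁ t₀ := hne₁ t₀ ⟨ht₀pos.le, ht₀Ioo.2⟩
  have hT1 : t₀ ^ (-μ - 1 : ℝ) = t₀ ^ (-μ : ℝ) * t₀⁻¹ := by
    rw [show (-μ - 1 : ℝ) = (-μ) + (-1) by ring, Real.rpow_add ht₀pos, Real.rpow_neg_one]
  -- the key strict inequality
  have hmain : μ * K * (a₁ ^ (-μ) * t₀ ^ (-μ - 1)) < a₁ * E₁ t₀ ^ (1 + 1 / μ) + a₂ * E₂ t₀ := by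
    by_cases hcase : θ * (K * a₁ ^ (-μ) * t₀ ^ (-μ)) ≤ E₁ t₀
    · -- Case A: E₁ is at least θ times the barrier
      have h1 : (θ * (K * a₁ ^ (-μ) * t₀ ^ (-μ))) ^ (1 + 1 / μ) ≤ (E₁ t₀) ^ (1 + 1 / μ) :=
        Real.rpow_le_rpow (by positivity) hcase (by positivity)
      have h2 : (θ * (K * a₁ ^ (-μ) * t₀ ^ (-μ))) ^ (1 + 1 / μ)
          = (θ * K) ^ (1 + 1 / μ) * (a₁ ^ (-(μ + 1)) * t₀ ^ (-(μ + 1))) := by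
        rw [show θ * (K * a₁ ^ (-μ) * t₀ ^ (-μ)) = θ * K * a₁ ^ (-μ) * t₀ ^ (-μ) by ring,
          Real.mul_rpow (by positivity) htp.le,
          Real.mul_rpow (by positivity) ha₁p.le,
          ← Real.rpow_mul ha₁.le, ← Real.rpow_mul ht₀pos.le,
          show (-μ : ℝ) * (1 + 1 / μ) = -(μ + 1) by field_simp]
        ring
      have ha' : a₁ * a₁ ^ (-(μ + 1) : ℝ) = a₁ ^ (-μ : ℝ) := by
        rw [show (-μ : ℝ) = 1 + (-(μ + 1)) by ring, Real.rpow_add ha₁, Real.rpow_one]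
      have e1 : a₁ * ((θ * K) ^ (1 + 1 / μ) * (a₁ ^ (-(μ + 1)) * t₀ ^ (-(μ + 1))))
          ≤ a₁ * (E₁ t₀) ^ (1 + 1 / μ) := by
        rw [← h2]; exact mul_le_mul_of_nonneg_left h1 ha₁.le
      have e2 : a₁ * ((θ * K) ^ (1 + 1 / μ) * (a₁ ^ (-(μ + 1)) * t₀ ^ (-(μ + 1))))
          = 2 * μ * K * (a₁ ^ (-μ) * t₀ ^ (-μ - 1)) := by
        rw [hkey, show (-(μ + 1) : ℝ) = -μ - 1 by ring, ← ha',
          show (-(μ + 1) : ℝ) = -μ - 1 by ring]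
        ring
      have e3 : 0 < μ * K * (a₁ ^ (-μ) * t₀ ^ (-μ - 1)) :=
        mul_pos (mul_pos hμ hKpos) (mul_pos ha₁p hBt')
      have e4 : 0 ≤ a₂ * E₂ t₀ := mul_nonneg ha₂.le hE₂0
      rw [e2] at e1
      linarith
    · -- Case B: the weighted E₂ term is at least (1-θ) times the barrier
      push_neg at hcase
      have hB2 : (1 - θ) * (K * a₁ ^ (-μ) * t₀ ^ (-μ)) ≤ η₀ * t₀ * E₂ t₀ := by linarith
      have h6 : μ * η₀ * (K * a₁ ^ (-μ) * t₀ ^ (-μ))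
          < (1 - θ) * a₂ * (K * a₁ ^ (-μ) * t₀ ^ (-μ)) := by
        have h := mul_pos (sub_pos.2 hBnum) hXpos
        linarith [h]
      have h5 : (1 - θ) * a₂ * (K * a₁ ^ (-μ) * t₀ ^ (-μ)) ≤ a₂ * (η₀ * t₀ * E₂ t₀) := by
        have := mul_le_mul_of_nonneg_left hB2 ha₂.le
        linarith
      have hηt : 0 < η₀ * t₀ := mul_pos hη₀ ht₀pos
      have h8 : μ * K * (a₁ ^ (-μ) * t₀ ^ (-μ - 1)) * (η₀ * t₀)
          < (a₂ * E₂ t₀) * (η₀ * t₀) := by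
        have hLHS : μ * K * (a₁ ^ (-μ) * t₀ ^ (-μ - 1)) * (η₀ * t₀)
            = μ * η₀ * (K * a₁ ^ (-μ) * t₀ ^ (-μ)) := by
          rw [hT1, show μ * K * (a₁ ^ (-μ) * (t₀ ^ (-μ) * t₀⁻¹)) * (η₀ * t₀)
              = (t₀⁻¹ * t₀) * (μ * η₀ * (K * a₁ ^ (-μ) * t₀ ^ (-μ))) by ring,
            inv_mul_cancel₀ ht₀pos.ne', one_mul]
        rw [hLHS]
        calc μ * η₀ * (K * a₁ ^ (-μ) * t₀ ^ (-μ))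
            < (1 - θ) * a₂ * (K * a₁ ^ (-μ) * t₀ ^ (-μ)) := h6
          _ ≤ a₂ * (η₀ * t₀ * E₂ t₀) := h5
          _ = (a₂ * E₂ t₀) * (η₀ * t₀) := by ring
      have h9 : μ * K * (a₁ ^ (-μ) * t₀ ^ (-μ - 1)) < a₂ * E₂ t₀ :=
        lt_of_mul_lt_mul_right h8 hηt.le
      have e4 : 0 ≤ a₁ * (E₁ t₀) ^ (1 + 1 / μ) :=
        mul_nonneg ha₁.le (Real.rpow_nonneg hE₁0 _)
      linarith
  -- contradiction
  have hd0 := hineq t₀ ht₀Ioo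
  have hfin : K * a₁ ^ (-μ) * (-μ * t₀ ^ (-μ - 1))
      = -(μ * K * (a₁ ^ (-μ) * t₀ ^ (-μ - 1))) := by ring
  rw [hfin] at h0le
  linarith
end
end
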